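/- The second derivative of f has a limit as s → 0 from the right, and lim_{s→0+} f''(s) = −(α−β)/(2α). -/

import Mathlib

open Real Filter MeasureTheory

noncomputable def fFJ (α β : ℝ) (s : ℝ) : ℝ :=
  (1 / ((β + 1) * α ^ β)) * ∫ x in (0:ℝ)..s, ((α + Real.log (1 + x)) ^ (β + 1) - α ^ (β + 1)) / x

theorem stmt_6 (α β : ℝ) (hβ : 0 ≤ β) (hαβ : β < α) :
    Filter.Tendsto (fun s => deriv (deriv (fFJ α β)) s)
      (nhdsWithin 0 (Set.Ioi 0)) (nhds (-(α - β) / (2 * α))) := by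
  have hα : 0 < α := lt_of_le_of_lt hβ hαβ
  set c : ℝ := 1 / ((β + 1) * α ^ β) with hc
  set h : ℝ → ℝ := fun x => (α + Real.log (1 + x)) ^ (β + 1) - α ^ (β + 1) with hhdef
  set g : ℝ → ℝ := fun x => h x / x with hgdef
  set h1 : ℝ → ℝ := fun x => (β + 1) * (α + Real.log (1 + x)) ^ β / (1 + x) with hh1def
  set h2 : ℝ → ℝ := fun x =>
    (β + 1) * (β * (α + Real.log (1 + x)) ^ (β - 1) - (α + Real.log (1 + x)) ^ β) / (1 + x) ^ 2
      with hh2def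
  have hv : ∀ x : ℝ, -1 < x → HasDerivAt (fun y => α + Real.log (1 + y)) (1 / (1 + x)) x := by
    intro x hx
    have h1x : (1:ℝ) + x ≠ 0 := by linarith
    have := ((Real.hasDerivAt_log h1x).comp x ((hasDerivAt_id x).const_add 1)).const_add α
    simpa [one_div] using this
  have hposv : ∀ x : ℝ, 0 ≤ x → 0 < α + Real.log (1 + x) := by
    intro x hx
    have : 0 ≤ Real.log (1 + x) := Real.log_nonneg (by linarith)
    linarith
  have hh0 : h 0 = 0 := by simp [hhdef]
  have hDh : ∀ x : ℝ, 0 ≤ x → HasDerivAt h (h1 x) x := by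
    intro x hx
    have hb : (0:ℝ) < α + Real.log (1 + x) := hposv x hx
    have := ((hv x (by linarith)).rpow_const (p := β + 1) (Or.inl hb.ne')).sub_const (α ^ (β + 1))
    refine this.congr_deriv ?_; symm
    rw [add_sub_cancel_right]
    simp [hh1def]
    ring
  have hDh1 : ∀ x : ℝ, 0 ≤ x → HasDerivAt h1 (h2 x) x := by
    intro x hx
    have hx1 : (0:ℝ) < 1 + x := by linarith
    have hb : (0:ℝ) < α + Real.log (1 + x) := hposv x hx
    have hA : HasDerivAt (fun y => (β + 1) * (α + Real.log (1 + y)) ^ β)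
        ((β + 1) * (1 / (1 + x) * β * (α + Real.log (1 + x)) ^ (β - 1))) x :=
      ((hv x (by linarith)).rpow_const (Or.inl hb.ne')).const_mul (β + 1)
    have hB : HasDerivAt (fun y : ℝ => 1 + y) 1 x := (hasDerivAt_id x).const_add 1
    have := hA.div hB hx1.ne'
    refine this.congr_deriv ?_; symm
    simp only [hh2def]
    field_simp
  have hmes : Measurable g := by
    apply Measurable.div _ measurable_id
    apply Measurable.sub _ measurable_const
    have hcont : Continuous fun t : ℝ => t ^ (β + 1) :=
      continuous_iff_continuousAt.mpr fun x =>
        Real.continuousAt_rpow_const x _ (Or.inr (by linarith))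
    exact hcont.measurable.comp
      ((Real.measurable_log.comp (measurable_const.add measurable_id)).const_add α)
  have hgc : ∀ x : ℝ, 0 < x → ContinuousAt g x := fun x hx =>
    ((hDh x hx.le).continuousAt.div continuousAt_id hx.ne')
  have hg0 : Tendsto g (nhdsWithin 0 (Set.Ioi 0)) (nhds (h1 0)) := by
    have hd := hDh 0 le_rfl
    rw [hasDerivAt_iff_tendsto_slope] at hd
    have h2' : Tendsto g (nhdsWithin 0 {(0:ℝ)}ᶜ) (nhds (h1 0)) := by
      refine hd.congr fun x => ?_
      simp [slope_def_field, hh0, hgdef]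
    exact h2'.mono_left (nhdsWithin_mono _ fun x hx => ne_of_gt hx)
  have hInt : ∀ s : ℝ, 0 < s → IntervalIntegrable g volume 0 s := by
    intro s hs
    have hbdd : ∀ᶠ x in nhdsWithin 0 (Set.Ioi 0), |g x| ≤ |h1 0| + 1 := by
      have habs : Tendsto (fun x => |g x|) (nhdsWithin 0 (Set.Ioi 0)) (nhds |h1 0|) := hg0.abs
      exact habs.eventually_le_const (lt_add_one _)
    obtain ⟨δ, hδ, hsub⟩ := mem_nhdsGT_iff_exists_Ioc_subset.mp hbdd
    have hδ0 : (0:ℝ) < δ := hδ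
    set δ' := min δ s with hδ'def
    have hδ' : 0 < δ' := lt_min hδ0 hs
    have hInt1 : IntervalIntegrable g volume 0 δ' := by
      rw [intervalIntegrable_iff_integrableOn_Ioc_of_le hδ'.le]
      apply Measure.integrableOn_of_bounded (M := |h1 0| + 1) measure_Ioc_lt_top.ne
        hmes.aestronglyMeasurable
      refine (ae_restrict_iff' measurableSet_Ioc).mpr (.of_forall fun x hx => ?_)
      rw [Real.norm_eq_abs]
      exact hsub ⟨hx.1, hx.2.trans (min_le_left _ _)⟩
    have hInt2 : IntervalIntegrable g volume δ' s := by
      apply ContinuousOn.intervalIntegrable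
      intro x hx
      rw [Set.uIcc_of_le (min_le_right δ s)] at hx
      exact (hgc x (lt_of_lt_of_le hδ' hx.1)).continuousWithinAt
    exact hInt1.trans hInt2
  have hfeq : fFJ α β = fun u => c * ∫ x in (0:ℝ)..u, g x := rfl
  have hD1 : ∀ s : ℝ, 0 < s → HasDerivAt (fFJ α β) (c * g s) s := by
    intro s hs
    have hmain : HasDerivAt (fun u => ∫ x in (0:ℝ)..u, g x) (g s) s :=
      intervalIntegral.integral_hasDerivAt_right (hInt s hs)
        hmes.stronglyMeasurable.stronglyMeasurableAtFilter (hgc s hs)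
    rw [hfeq]
    exact hmain.const_mul c
  have hEq : ∀ s : ℝ, 0 < s → deriv (deriv (fFJ α β)) s = c * ((h1 s * s - h s) / s ^ 2) := by
    intro s hs
    have hev : deriv (fFJ α β) =ᶠ[nhds s] fun u => c * g u := by
      filter_upwards [Ioi_mem_nhds hs] with u hu
      exact (hD1 u hu).deriv
    rw [Filter.EventuallyEq.deriv_eq hev]
    have hdg : HasDerivAt g ((h1 s * s - h s * 1) / s ^ 2) s :=
      (hDh s hs.le).div (hasDerivAt_id s) hs.ne'
    rw [(hdg.const_mul c).deriv]
    ring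
  have hch1 : ContinuousAt h1 0 := (hDh1 0 le_rfl).continuousAt
  have hch : ContinuousAt h 0 := (hDh 0 le_rfl).continuousAt
  have hcv : ContinuousAt (fun y : ℝ => α + Real.log (1 + y)) 0 := (hv 0 (by norm_num)).continuousAt
  have hch2 : ContinuousAt h2 0 := by
    have c1 : ContinuousAt (fun y : ℝ => (α + Real.log (1 + y)) ^ (β - 1)) 0 := by
      have houter : ContinuousAt (fun t : ℝ => t ^ (β - 1)) (α + Real.log (1 + (0:ℝ))) := by
        simpa using Real.continuousAt_rpow_const α (β - 1) (Or.inl hα.ne')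
      exact ContinuousAt.comp (g := fun t : ℝ => t ^ (β - 1))
        (f := fun y : ℝ => α + Real.log (1 + y)) houter hcv
    have c2 : ContinuousAt (fun y : ℝ => (α + Real.log (1 + y)) ^ β) 0 := by
      have houter : ContinuousAt (fun t : ℝ => t ^ β) (α + Real.log (1 + (0:ℝ))) := by
        simpa using Real.continuousAt_rpow_const α β (Or.inl hα.ne')
      exact ContinuousAt.comp (g := fun t : ℝ => t ^ β)
        (f := fun y : ℝ => α + Real.log (1 + y)) houter hcv
    have cden : ContinuousAt (fun y : ℝ => ((1:ℝ) + y) ^ 2) 0 := by fun_prop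
    exact ContinuousAt.div (continuousAt_const.mul ((continuousAt_const.mul c1).sub c2)) cden
      (by norm_num)
  have hLH : Tendsto (fun s => (h1 s * s - h s) / s ^ 2) (nhdsWithin 0 (Set.Ioi 0))
      (nhds (h2 0 / 2)) := by
    apply HasDerivAt.lhopital_zero_nhdsGT (f' := fun x => x * h2 x) (g' := fun x => 2 * x)
    · filter_upwards [self_mem_nhdsWithin] with x hx
      have hxx : (0:ℝ) ≤ x := le_of_lt hx
      have := ((hDh1 x hxx).mul (hasDerivAt_id x)).sub (hDh x hxx)
      refine this.congr_deriv ?_; symm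
      simp only [id_eq]
      ring
    · filter_upwards with x
      simpa using hasDerivAt_pow 2 x
    · filter_upwards [self_mem_nhdsWithin] with x hx
      exact (mul_pos two_pos hx).ne'
    · have hc0 : ContinuousAt (fun x => h1 x * x - h x) 0 := (hch1.mul continuousAt_id).sub hch
      have h0 : h1 0 * 0 - h 0 = 0 := by simp [hh0]
      have := hc0.tendsto.mono_left (nhdsWithin_le_nhds (s := Set.Ioi (0:ℝ)))
      simpa [hh0] using this
    · have : Tendsto (fun x : ℝ => x ^ 2) (nhds 0) (nhds ((0:ℝ) ^ 2)) :=
        (continuous_pow 2).continuousAt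
      simpa using this.mono_left (nhdsWithin_le_nhds (s := Set.Ioi (0:ℝ)))
    · have hx2 : Tendsto (fun x => h2 x / 2) (nhdsWithin 0 (Set.Ioi 0)) (nhds (h2 0 / 2)) :=
        (hch2.tendsto.div_const 2).mono_left (nhdsWithin_le_nhds (s := Set.Ioi (0:ℝ)))
      apply hx2.congr'
      filter_upwards [self_mem_nhdsWithin] with x hx
      rw [mul_comm 2 x, mul_div_mul_left _ _ hx.ne']
  have hmain : Tendsto (fun s => c * ((h1 s * s - h s) / s ^ 2)) (nhdsWithin 0 (Set.Ioi 0))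
      (nhds (c * (h2 0 / 2))) := hLH.const_mul c
  have hval : c * (h2 0 / 2) = -(α - β) / (2 * α) := by
    have hpow : α ^ β ≠ 0 := (Real.rpow_pos_of_pos hα β).ne'
    have hβ1 : β + 1 ≠ 0 := by linarith
    have h2v : h2 0 = (β + 1) * (β * (α ^ β / α) - α ^ β) := by
      simp only [hh2def]
      rw [show (1:ℝ) + 0 = 1 by norm_num, Real.log_one, add_zero, Real.rpow_sub hα,
        Real.rpow_one]
      norm_num
    rw [h2v, hc]
    field_simp
    ring
  rw [← hval]
  apply hmain.congr'
  filter_upwards [self_mem_nhdsWithin] with s hs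
  exact (hEq s hs).symm
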